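/- arXiv:1509.02102 — 5 statements merged into one kernel-verified Lean document; each statement's English description precedes it below -/
import Mathlib

section
/- Let E > 1 and α ≥ 0. For u ∈ (0,1), the unique solution h(u) of (1-u)(1+E*h*u)² = E*(1 + E*h*u + E*α*u) (in h > 0) is given explicitly by h(u) = (1/(E*u*(1-u))) * ( (E/2)*(1 + sqrt(1 + 4*α*u*(1-u))) + u - 1 ). -/
theorem stmt_3 (E α u : ℝ) (hE : 1 < E) (hα : 0 ≤ α) (hu : u ∈ Set.Ioo (0:ℝ) 1)
    (hval : ℝ)
    (hdef : hval = (1/(E*u*(1-u))) * ((E/2) * (1 + Real.sqrt (1 + 4*α*u*(1-u))) + u - 1)) :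
    0 < hval ∧ (1-u) * (1+E*hval*u)^2 = E * (1 + E*hval*u + E*α*u) ∧
      ∀ h : ℝ, 0 < h → (1-u) * (1+E*h*u)^2 = E * (1 + E*h*u + E*α*u) → h = hval := by
  obtain ⟨hu0, hu1⟩ := hu
  set s := Real.sqrt (1 + 4*α*u*(1-u)) with hsdef
  have h1u : 0 < 1 - u := by linarith
  have hE0 : 0 < E := by linarith
  have harg : (1:ℝ) ≤ 1 + 4*α*u*(1-u) := by
    nlinarith [mul_nonneg (mul_nonneg hα hu0.le) h1u.le]
  have hs1 : 1 ≤ s := by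
    have h0 : (0:ℝ) ≤ 1 + 4*α*u*(1-u) := by linarith
    nlinarith [Real.sq_sqrt h0, Real.sqrt_nonneg (1 + 4*α*u*(1-u))]
  have hs2 : s^2 = 1 + 4*α*u*(1-u) := Real.sq_sqrt (by linarith)
  have hden : 0 < E*u*(1-u) := by positivity
  have hne : E*u*(1-u) ≠ 0 := ne_of_gt hden
  have hEne : E ≠ 0 := ne_of_gt hE0
  have hune : u ≠ 0 := ne_of_gt hu0
  have h1une : (1:ℝ) - u ≠ 0 := ne_of_gt h1u
  -- positivity
  have hnum : 0 < (E/2) * (1 + s) + u - 1 := by nlinarith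
  have hpos : 0 < hval := by
    rw [hdef]
    have : 0 < 1/(E*u*(1-u)) := by positivity
    nlinarith
  have hw : 1 + E*hval*u = E*(1+s)/(2*(1-u)) := by
    rw [hdef]; field_simp; ring
  have heq : (1-u) * (1+E*hval*u)^2 = E * (1 + E*hval*u + E*α*u) := by
    rw [hw]
    field_simp
    linear_combination hs2
  refine ⟨hpos, heq, ?_⟩
  intro h hh heqh
  have key : (h - hval) * (E*u) * ((1-u)*(2 + E*u*(h+hval)) - E) = 0 := by
    linear_combination heqh - heq
  have hwp : (1-u)*(1 + E*hval*u) = E*(1+s)/2 := by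
    rw [hw]; field_simp
  have hfac : (1-u)*(2 + E*u*(h+hval)) - E > 0 := by
    have h1 : (1-u)*(1 + E*h*u) > 0 := by positivity
    have h2 : (1-u)*(1 + E*hval*u) ≥ E := by rw [hwp]; nlinarith
    nlinarith
  have := mul_ne_zero hEne hune
  rcases mul_eq_zero.mp key with h' | h'
  · rcases mul_eq_zero.mp h' with h'' | h''
    · linarith [sub_eq_zero.mp h'']
    · exact absurd h'' this
  · linarith
end

section
/- Let α ≥ 0 and consider P(h,u) = u*( h²*u² + h*(2-h)*u + α + 1 - h ) for h > 0. The minimal h > 0 such that P(h,·) admits a multiple root in [0,1) equals 1 + α if α ≤ 1, and equals 2*sqrt(α) if α > 1. -/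
lemma deriv_cubic_aux (a b c u : ℝ) :
    deriv (fun u : ℝ => u * (a * u ^ 2 + b * u + c)) u
      = 3 * a * u ^ 2 + 2 * b * u + c := by
  have h2 : HasDerivAt (fun u : ℝ => a * u ^ 3 + (b * u ^ 2 + c * u))
      (a * (3 * u ^ 2) + (b * (2 * u ^ 1) + c * 1)) u := by
    have p3 := (hasDerivAt_pow 3 u).const_mul a
    have p2 := (hasDerivAt_pow 2 u).const_mul b
    have p1 := (hasDerivAt_id u).const_mul c
    exact (p3.add (p2.add p1)).congr_deriv (by norm_num)
  have heq : (fun u : ℝ => u * (a * u ^ 2 + b * u + c))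
      = fun u : ℝ => a * u ^ 3 + (b * u ^ 2 + c * u) := by
    funext v; ring
  rw [heq, h2.deriv]; ring

theorem stmt_7 (α : ℝ) (hα : 0 ≤ α)
    (P : ℝ → ℝ → ℝ)
    (hP : ∀ h u : ℝ, P h u = u * (h^2*u^2 + h*(2-h)*u + α + 1 - h)) :
    IsLeast {h : ℝ | 0 < h ∧ ∃ u ∈ Set.Ico (0:ℝ) 1, P h u = 0 ∧ deriv (P h) u = 0}
      (if α ≤ 1 then 1 + α else 2 * Real.sqrt α) := by
  have hderiv : ∀ h u : ℝ, deriv (P h) u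
      = 3 * h ^ 2 * u ^ 2 + 2 * (h * (2 - h)) * u + (α + 1 - h) := by
    intro h u
    have hfun : P h = fun u : ℝ => u * (h ^ 2 * u ^ 2 + h * (2 - h) * u + (α + 1 - h)) := by
      funext v; rw [hP]; ring
    rw [hfun, deriv_cubic_aux]
  constructor
  · -- membership
    split_ifs with hle
    · refine ⟨by linarith, 0, ⟨le_refl 0, one_pos⟩, ?_, ?_⟩
      · rw [hP]; ring
      · rw [hderiv]; ring
    · push_neg at hle
      have hs1 : 1 < Real.sqrt α := by
        have := Real.lt_sqrt (x := 1) (y := α) (by norm_num)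
        simpa using this.mpr (by simpa using hle)
      obtain ⟨h, hh⟩ : ∃ h : ℝ, h = 2 * Real.sqrt α := ⟨_, rfl⟩
      rw [← hh]
      have hsq : h ^ 2 = 4 * α := by
        have := Real.sq_sqrt hα
        rw [hh]; nlinarith
      have h2 : 2 < h := by rw [hh]; linarith
      have hpos : 0 < h := by linarith
      have hne : h ≠ 0 := ne_of_gt hpos
      refine ⟨hpos, (h - 2) / (2 * h), ⟨div_nonneg (by linarith) (by linarith), ?_⟩, ?_, ?_⟩
      · rw [div_lt_one (by linarith)]; linarith
      · rw [hP]; field_simp; linear_combination (2 - h) * hsq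
      · rw [hderiv]; field_simp; linear_combination (-1) * hsq
  · -- lower bound
    rintro h ⟨hpos, u, ⟨hu0, hu1⟩, hPe, hDe⟩
    rw [hP] at hPe
    rw [hderiv] at hDe
    rcases eq_or_lt_of_le hu0 with h0 | hu0'
    · -- u = 0
      have hhe : h = 1 + α := by rw [← h0] at hDe; nlinarith
      split_ifs with hle
      · linarith
      · push_neg at hle
        have hs := Real.sq_sqrt hα
        nlinarith [sq_nonneg (Real.sqrt α - 1)]
    · -- u > 0
      have hune : u ≠ 0 := ne_of_gt hu0'
      have hQ : h ^ 2 * u ^ 2 + h * (2 - h) * u + α + 1 - h = 0 :=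
        (mul_eq_zero.mp hPe).resolve_left hune
      have key0 : u * (h * (2 * h * u - (h - 2))) = 0 := by
        linear_combination hDe - hQ
      have key2 : 2 * h * u = h - 2 := by
        have := (mul_eq_zero.mp key0).resolve_left hune
        have := (mul_eq_zero.mp this).resolve_left (ne_of_gt hpos)
        linarith
      have h2 : 2 < h := by nlinarith
      have hsq : h ^ 2 = 4 * α := by
        linear_combination (-4) * hQ + (2 * h * u + 2 - h) * key2
      have hα1 : 1 < α := by nlinarith
      split_ifs with hle
      · linarith
      · have hs : Real.sqrt α = h / 2 := by
          rw [show α = (h / 2) ^ 2 by nlinarith]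
          exact Real.sqrt_sq (by linarith)
        rw [hs]; linarith
end

section
/- Let E > 1, h > 0 and u > 0, and set z = E*h*u. Then the partial derivative of W(E,h,u) = u²/2 - u³/3 - u/h + (1/(E*h²))*ln(1+E*h*u) with respect to h equals (1/(E*h³)) * ( z - 2*ln(1+z) + z/(1+z) ), and this quantity is strictly positive. -/
lemma aux_hasDerivAt (x : ℝ) (hx : 0 < 1 + x) :
    HasDerivAt (fun y : ℝ => y - 2*Real.log (1+y) + y/(1+y))
      (x^2/(1+x)^2) x := by
  have h1 : HasDerivAt (fun y : ℝ => 1 + y) 1 x := by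
    simpa using (hasDerivAt_id x).const_add 1
  have hlog : HasDerivAt (fun y : ℝ => Real.log (1+y)) (1/(1+x)) x :=
    h1.log hx.ne'
  have hdiv : HasDerivAt (fun y : ℝ => y/(1+y))
      ((1*(1+x) - x*1)/(1+x)^2) x :=
    (hasDerivAt_id x).div h1 hx.ne'
  have := ((hasDerivAt_id x).sub (hlog.const_mul 2)).add hdiv
  refine this.congr_deriv ?_
  field_simp
  ring

lemma aux_pos (z : ℝ) (hz : 0 < z) :
    0 < z - 2*Real.log (1+z) + z/(1+z) := by
  set f : ℝ → ℝ := fun y => y - 2*Real.log (1+y) + y/(1+y) with hf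
  have hmono : StrictMonoOn f (Set.Ici (0:ℝ)) := by
    apply StrictMonoOn.mono (s := Set.Ici (0:ℝ)) ?_ le_rfl
    apply strictMonoOn_of_deriv_pos (convex_Ici 0)
    · intro x hx
      have hx' : (0:ℝ) ≤ x := hx
      exact (aux_hasDerivAt x (by linarith)).continuousAt.continuousWithinAt
    · intro x hx
      rw [interior_Ici] at hx
      have hx' : (0:ℝ) < x := hx
      rw [(aux_hasDerivAt x (by linarith)).deriv]
      positivity
  have h0 : f 0 = 0 := by simp [hf]
  have := hmono (Set.self_mem_Ici) (Set.mem_Ici.mpr hz.le) hz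
  rw [h0] at this
  exact this

theorem stmt_11 (E h u z : ℝ) (hE : 1 < E) (hh : 0 < h) (hu : 0 < u)
    (hz : z = E*h*u) :
    HasDerivAt (fun t : ℝ => u^2/2 - u^3/3 - u/t + (1/(E*t^2)) * Real.log (1 + E*t*u))
      ((1/(E*h^3)) * (z - 2*Real.log (1+z) + z/(1+z))) h ∧
    0 < (1/(E*h^3)) * (z - 2*Real.log (1+z) + z/(1+z)) := by
  have hE0 : (0:ℝ) < E := by linarith
  have hz0 : 0 < z := by rw [hz]; positivity
  have h1z : (0:ℝ) < 1 + E*h*u := by positivity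
  constructor
  · -- derivative computation
    have hB : HasDerivAt (fun t : ℝ => u/t) (u * (-(h^2)⁻¹)) h := by
      simpa [div_eq_mul_inv] using (hasDerivAt_inv hh.ne').const_mul u
    have hEt2 : HasDerivAt (fun t : ℝ => E*t^2) (E*(2*h)) h := by
      simpa using ((hasDerivAt_pow 2 h).const_mul E)
    have hEh2 : E*h^2 ≠ 0 := by positivity
    have hinv : HasDerivAt (fun t : ℝ => 1/(E*t^2))
        (-(E*(2*h))/(E*h^2)^2) h := by
      simp only [one_div]; exact hEt2.inv hEh2
    have hlin : HasDerivAt (fun t : ℝ => 1 + E*t*u) (E*u) h := by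
      have : HasDerivAt (fun t : ℝ => E*t*u) (E*u) h := by
        simpa [mul_comm, mul_assoc, mul_left_comm] using
          (hasDerivAt_id h).const_mul (E*u)
      simpa using this.const_add 1
    have hlog : HasDerivAt (fun t : ℝ => Real.log (1 + E*t*u))
        ((E*u)/(1 + E*h*u)) h := hlin.log h1z.ne'
    have hC : HasDerivAt (fun t : ℝ => (1/(E*t^2)) * Real.log (1 + E*t*u))
        ((-(E*(2*h))/(E*h^2)^2) * Real.log (1 + E*h*u)
          + (1/(E*h^2)) * ((E*u)/(1 + E*h*u))) h := hinv.mul hlog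
    have hall := (((hasDerivAt_const h (u^2/2 - u^3/3)).sub hB).add hC)
    have heq : (fun t : ℝ => u^2/2 - u^3/3 - u/t + (1/(E*t^2)) * Real.log (1 + E*t*u))
        = fun t : ℝ => (u^2/2 - u^3/3 - u/t) + (1/(E*t^2)) * Real.log (1 + E*t*u) := by
      funext t; ring
    rw [heq]
    refine hall.congr_deriv ?_
    rw [hz]
    field_simp
    ring
  · have := aux_pos z hz0
    positivity
end

section
/- Define g(E) = W(E, h₁(E), u⁺(E,h₁(E))) for E > 1, where W(E,h,u) = u²/2 - u³/3 - u/h + (1/(E*h²))*ln(1+E*h*u), h₁(E) = (1/E)*(2E-1+2*sqrt(E*(E-1))) and u⁺(E,h₁(E)) = 1 - E + sqrt(E*(E-1)). Then g(E) < 0 for every E > 1. -/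
/-- Padé-type upper bound for the logarithm: `log (1+z) ≤ z(6+z)/(6+4z)` for `z ≥ 0`. -/
lemma log_le_pade (z : ℝ) (hz : 0 ≤ z) : Real.log (1 + z) ≤ z * (6 + z) / (6 + 4 * z) := by
  set f : ℝ → ℝ := fun x => x * (6 + x) / (6 + 4 * x) - Real.log (1 + x) with hf
  have hden : ∀ x : ℝ, x ∈ Set.Ici (0:ℝ) → (6 + 4 * x) ≠ 0 := by
    intro x hx; simp only [Set.mem_Ici] at hx; nlinarith
  have hone : ∀ x : ℝ, x ∈ Set.Ici (0:ℝ) → (1 + x) ≠ 0 := by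
    intro x hx; simp only [Set.mem_Ici] at hx; nlinarith
  have hderiv : ∀ x : ℝ, 0 < x → HasDerivAt f
      (((6 + 2*x) * (6 + 4*x) - x * (6 + x) * 4) / (6 + 4*x)^2 - 1/(1+x)) x := by
    intro x hx
    have h1 : HasDerivAt (fun x : ℝ => x * (6 + x)) (6 + 2*x) x := by
      have := (hasDerivAt_id x).mul ((hasDerivAt_const x (6:ℝ)).add (hasDerivAt_id x))
      refine this.congr_deriv ?_; simp [id]; ring
    have h2 : HasDerivAt (fun x : ℝ => 6 + 4*x) 4 x := by
      have := (hasDerivAt_const x (6:ℝ)).add ((hasDerivAt_const x (4:ℝ)).mul (hasDerivAt_id x))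
      refine this.congr_deriv ?_; simp [id]
    have hd : (6 + 4*x) ≠ 0 := by nlinarith
    have hdiv := h1.div h2 hd
    have h1x : (1 + x) ≠ 0 := by nlinarith
    have hlog : HasDerivAt (fun x : ℝ => Real.log (1 + x)) (1/(1+x)) x := by
      have hadd : HasDerivAt (fun x : ℝ => 1 + x) 1 x := by
        exact ((hasDerivAt_const x (1:ℝ)).add (hasDerivAt_id x)).congr_deriv (by simp)
      have := hadd.log h1x
      convert this using 1
    exact hdiv.sub hlog
  have hmono : MonotoneOn f (Set.Ici (0:ℝ)) := by
    apply monotoneOn_of_deriv_nonneg (convex_Ici 0)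
    · apply ContinuousOn.sub
      · exact (continuousOn_id.mul (by fun_prop)).div (by fun_prop) hden
      · exact ContinuousOn.log (by fun_prop) hone
    · intro x hx
      rw [interior_Ici, Set.mem_Ioi] at hx
      exact ((hderiv x hx).differentiableAt).differentiableWithinAt
    · intro x hx
      rw [interior_Ici, Set.mem_Ioi] at hx
      rw [(hderiv x hx).deriv]
      have h1x : (0:ℝ) < 1 + x := by linarith
      have hdx : (0:ℝ) < (6 + 4*x)^2 := by positivity
      rw [sub_nonneg, div_le_div_iff₀ h1x hdx]
      nlinarith [sq_nonneg x, hx.le, mul_pos hx (mul_pos hx hx)]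
  have h0 : f 0 ≤ f z := hmono (by simp) (by simpa using hz) hz
  have hf0 : f 0 = 0 := by simp [hf]
  have := hf0 ▸ h0
  simp only [hf] at this
  linarith

theorem stmt_13 (E : ℝ) (hE : 1 < E)
    (h₁ u g : ℝ)
    (hh₁ : h₁ = (1/E) * (2*E - 1 + 2*Real.sqrt (E*(E-1))))
    (hu : u = 1 - E + Real.sqrt (E*(E-1)))
    (hg : g = u^2/2 - u^3/3 - u/h₁ + (1/(E*h₁^2)) * Real.log (1 + E*h₁*u)) :
    g < 0 := by
  have hE0 : (0:ℝ) < E := by linarith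
  set s := Real.sqrt (E*(E-1)) with hs_def
  have hs0 : 0 ≤ s := Real.sqrt_nonneg _
  have hs2 : s * s = E * (E - 1) := Real.mul_self_sqrt (by nlinarith)
  have hs_gt : E - 1 < s := by nlinarith
  have hu_pos : 0 < u := by rw [hu]; linarith
  have hh_pos : 0 < h₁ := by
    rw [hh₁]; apply mul_pos (by positivity); linarith
  have hEh : E * h₁ = 2*E - 1 + 2*s := by
    rw [hh₁]; field_simp
  have hz_eq : E * h₁ * u = s + (E - 1) := by
    rw [hEh, hu]; linear_combination 2 * hs2
  have hz_pos : 0 < E * h₁ * u := by rw [hz_eq]; linarith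
  have hden_pos : (0:ℝ) < 6 + 4 * (E * h₁ * u) := by linarith
  have hlog : Real.log (1 + E*h₁*u) ≤
      (E*h₁*u) * (6 + E*h₁*u) / (6 + 4 * (E*h₁*u)) := log_le_pade _ hz_pos.le
  have hcoef : (0:ℝ) < 1/(E*h₁^2) := by positivity
  have hgle : g ≤ u^2/2 - u^3/3 - u/h₁ +
      (1/(E*h₁^2)) * ((E*h₁*u) * (6 + E*h₁*u) / (6 + 4 * (E*h₁*u))) := by
    rw [hg]
    have := mul_le_mul_of_nonneg_left hlog hcoef.le
    linarith
  have hA : u^2/2 - u^3/3 - u/h₁ +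
      (1/(E*h₁^2)) * ((E*h₁*u) * (6 + E*h₁*u) / (6 + 4 * (E*h₁*u)))
      = u^2 * (1/2 - u/3 - 3*E/(6 + 4 * (E*h₁*u))) := by
    field_simp
    ring
  have hbracket : 1/2 - u/3 - 3*E/(6 + 4 * (E*h₁*u)) < 0 := by
    rw [sub_neg, lt_div_iff₀ hden_pos, hz_eq, hu]
    nlinarith [hs2]
  have hfin : u^2 * (1/2 - u/3 - 3*E/(6 + 4 * (E*h₁*u))) < 0 :=
    mul_neg_of_pos_of_neg (by positivity) hbracket
  calc g ≤ _ := hgle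
    _ = _ := hA
    _ < 0 := hfin
end

section
/- Let E > 1 and define 𝒲(h) = W(E,h,u⁺(E,h)) for h > h₁(E), where W(E,h,u) = u²/2 - u³/3 - u/h + (1/(E*h²))*ln(1+E*h*u) and u⁺(E,h) is the larger root of (1-u)(1+Ehu) = E in (0,1). Then h ↦ 𝒲(h) is strictly increasing on (h₁(E), ∞), satisfies 𝒲(h) → 1/6 as h → +∞, and 𝒲 is negative at h = h₁(E); consequently there exists a unique h⁻(E) > h₁(E) with sign(𝒲(h)) = sign(h - h⁻(E)). -/
open Filter Set Topology

lemma aux_g_deriv (y : ℝ) (hy : 0 ≤ y) :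
    HasDerivAt (fun y : ℝ => y + y/(1+y) - 2*Real.log (1+y)) (y^2/(1+y)^2) y := by
  have h1 : (1:ℝ) + y ≠ 0 := by positivity
  have d1 : HasDerivAt (fun y : ℝ => 1 + y) 1 y := (hasDerivAt_id y).const_add 1
  have d2 : HasDerivAt (fun y : ℝ => y/(1+y)) ((1*(1+y) - y*1)/(1+y)^2) y :=
    (hasDerivAt_id y).div d1 h1
  have d3 : HasDerivAt (fun y : ℝ => Real.log (1+y)) (1/(1+y)) y := by
    simpa using d1.log h1
  have := ((hasDerivAt_id y).add d2).sub ((d3.const_mul 2))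
  refine this.congr_deriv ?_
  field_simp
  ring

lemma aux_g_pos (x : ℝ) (hx : 0 < x) : 0 < x + x/(1+x) - 2*Real.log (1+x) := by
  have hmono : StrictMonoOn (fun y : ℝ => y + y/(1+y) - 2*Real.log (1+y)) (Set.Ici 0) := by
    apply strictMonoOn_of_deriv_pos (convex_Ici 0)
    · intro y hy
      exact ((aux_g_deriv y hy).continuousAt).continuousWithinAt
    · intro y hy
      rw [interior_Ici] at hy
      have hy' : (0:ℝ) < y := hy
      rw [(aux_g_deriv y hy'.le).deriv]
      positivity
  have := hmono (Set.self_mem_Ici) (Set.mem_Ici.2 hx.le) hx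
  simpa using this

set_option maxHeartbeats 2000000 in
theorem stmt_14 (E : ℝ) (hE : 1 < E)
    (h₁ : ℝ) (hh₁ : h₁ = (1/E) * (2*E - 1 + 2*Real.sqrt (E*(E-1))))
    (up : ℝ → ℝ)
    (hup : ∀ h : ℝ, up h =
      (1/2) * (1 - 1/(E*h) + Real.sqrt ((1 - 1/(E*h))^2 - 4*(E-1)/(E*h))))
    (W : ℝ → ℝ)
    (hW : ∀ h : ℝ, W h =
      (up h)^2/2 - (up h)^3/3 - (up h)/h + (1/(E*h^2)) * Real.log (1 + E*h*(up h))) :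
    StrictMonoOn W (Set.Ioi h₁) ∧
    Tendsto W atTop (nhds (1/6)) ∧
    W h₁ < 0 ∧
    ∃! hm : ℝ, h₁ < hm ∧ ∀ h : ℝ, h₁ < h →
      ((W h < 0 ↔ h < hm) ∧ (W h = 0 ↔ h = hm) ∧ (0 < W h ↔ hm < h)) := by
  have hE0 : (0:ℝ) < E := by linarith
  set r := Real.sqrt (E*(E-1)) with hrdef
  have hr2 : r^2 = E*(E-1) := Real.sq_sqrt (by nlinarith)
  have hrpos : 0 < r := Real.sqrt_pos.2 (by nlinarith)
  have hEh₁ : E * h₁ = 2*E - 1 + 2*r := by rw [hh₁]; field_simp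
  have hEh₁gt : 1 < E * h₁ := by nlinarith
  have h₁pos : 0 < h₁ := by nlinarith
  have ht₁pos : 0 < 2*E-1-2*r := by nlinarith [hr2, sq_nonneg (2*r - (2*E-1))]
  have ht₁ : 1/(E*h₁) = 2*E-1-2*r := by
    rw [hEh₁, div_eq_iff (by nlinarith)]; nlinarith [hr2]
  have ht₁lt1 : 2*E-1-2*r < 1 := by nlinarith [hr2]
  have hDval : ∀ h:ℝ, 0 < h → (1 - 1/(E*h))^2 - 4*(E-1)/(E*h)
      = (2*E-1-2*r - 1/(E*h))*(2*E-1+2*r - 1/(E*h)) := by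
    intro h hh
    have hne : E*h ≠ 0 := by positivity
    field_simp
    linear_combination (4*E^2*h^2) * hr2
  have hfac : ∀ h:ℝ, h₁ ≤ h → 0 < h ∧ 0 < 1/(E*h) ∧ 1/(E*h) ≤ 2*E-1-2*r := by
    intro h hh
    have hh0 : 0 < h := lt_of_lt_of_le h₁pos hh
    refine ⟨hh0, by positivity, ?_⟩
    rw [← ht₁]
    exact one_div_le_one_div_of_le (by positivity) (mul_le_mul_of_nonneg_left hh hE0.le)
  have hbpos : ∀ h:ℝ, h₁ ≤ h → 0 < 1 - 1/(E*h) := by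
    intro h hh
    obtain ⟨_, _, h3⟩ := hfac h hh
    linarith
  have hD0 : ∀ h:ℝ, h₁ ≤ h → 0 ≤ (1 - 1/(E*h))^2 - 4*(E-1)/(E*h) := by
    intro h hh
    obtain ⟨hh0, h2, h3⟩ := hfac h hh
    rw [hDval h hh0]
    have : 0 ≤ 2*E-1+2*r - 1/(E*h) := by linarith
    nlinarith
  have hDpos : ∀ h:ℝ, h₁ < h → 0 < (1 - 1/(E*h))^2 - 4*(E-1)/(E*h) := by
    intro h hh
    obtain ⟨hh0, h2, h3⟩ := hfac h hh.le
    rw [hDval h hh0]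
    have hlt : 1/(E*h) < 1/(E*h₁) := by
      apply one_div_lt_one_div_of_lt (by positivity)
      exact mul_lt_mul_of_pos_left hh hE0
    rw [ht₁] at hlt
    have : 0 < 2*E-1+2*r - 1/(E*h) := by linarith
    nlinarith
  have hup_pos : ∀ h:ℝ, h₁ ≤ h → 0 < up h := by
    intro h hh
    rw [hup h]
    have := hbpos h hh
    have := Real.sqrt_nonneg ((1 - 1/(E*h))^2 - 4*(E-1)/(E*h))
    nlinarith
  have key : ∀ h:ℝ, h₁ ≤ h → E*h*(up h)^2 - (E*h-1)*(up h) + (E-1) = 0 := by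
    intro h hh
    obtain ⟨hh0, h2, h3⟩ := hfac h hh
    have hne : E*h ≠ 0 := by positivity
    rw [hup h]
    set s := Real.sqrt ((1 - 1/(E*h))^2 - 4*(E-1)/(E*h)) with hs
    have hs2 : s^2 = (1 - 1/(E*h))^2 - 4*(E-1)/(E*h) := Real.sq_sqrt (hD0 h hh)
    have hs2' : (E*h*s)^2 = (E*h-1)^2 - 4*(E-1)*(E*h) := by
      rw [mul_pow, hs2]; field_simp
    field_simp
    linear_combination hs2'
  have hderiv : ∀ h:ℝ, h₁ < h → HasDerivAt W
      ((E*h*up h + (E*h*up h)/(1+E*h*up h) - 2*Real.log (1+E*h*up h))/(E*h^3)) h := by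
    intro h hh
    obtain ⟨hh0, h2, h3⟩ := hfac h hh.le
    have hne : E*h ≠ 0 := by positivity
    have hupos := hup_pos h hh.le
    have hxpos : 0 < E*h*up h := by positivity
    have h1xpos : (0:ℝ) < 1 + E*h*up h := by linarith
    have h1xne : (1:ℝ) + E*h*up h ≠ 0 := h1xpos.ne'
    have hDne : (1 - 1/(E*h))^2 - 4*(E-1)/(E*h) ≠ 0 := (hDpos h hh).ne'
    have d1 : DifferentiableAt ℝ (fun h:ℝ => 1/(E*h)) h :=
      (differentiableAt_const 1).div (differentiableAt_fun_id.const_mul E) hne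
    have d2 : DifferentiableAt ℝ (fun h:ℝ => 4*(E-1)/(E*h)) h :=
      (differentiableAt_const _).div (differentiableAt_fun_id.const_mul E) hne
    have dD : DifferentiableAt ℝ (fun h:ℝ => (1 - 1/(E*h))^2 - 4*(E-1)/(E*h)) h :=
      (((differentiableAt_const 1).sub d1).pow 2).sub d2
    have dup' : DifferentiableAt ℝ
        (fun h:ℝ => (1/2) * (1 - 1/(E*h) + Real.sqrt ((1 - 1/(E*h))^2 - 4*(E-1)/(E*h)))) h :=
      ((((differentiableAt_const 1).sub d1).add (dD.sqrt hDne)).const_mul _)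
    have dup : DifferentiableAt ℝ up h := by
      have heq : up =ᶠ[nhds h]
          (fun h:ℝ => (1/2) * (1 - 1/(E*h) + Real.sqrt ((1 - 1/(E*h))^2 - 4*(E-1)/(E*h)))) :=
        Filter.Eventually.of_forall hup
      exact heq.differentiableAt_iff.mpr dup'
    set u' := deriv up h with hu'def
    have hu' : HasDerivAt up u' h := dup.hasDerivAt
    have A : HasDerivAt (fun h:ℝ => up h^2/2) ((2*up h^1*u')/2) h := (hu'.pow 2).div_const 2
    have B : HasDerivAt (fun h:ℝ => up h^3/3) ((3*up h^2*u')/3) h := (hu'.pow 3).div_const 3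
    have C : HasDerivAt (fun h:ℝ => up h/h) ((u'*h - up h*1)/h^2) h :=
      hu'.div (hasDerivAt_id h) hh0.ne'
    have q : HasDerivAt (fun h:ℝ => E*h^2) (E*(2*h^1)) h := (hasDerivAt_pow 2 h).const_mul E
    have P1 : HasDerivAt (fun h:ℝ => 1/(E*h^2)) ((0*(E*h^2) - 1*(E*(2*h^1)))/(E*h^2)^2) h :=
      (hasDerivAt_const h 1).div q (by positivity)
    have m : HasDerivAt (fun h:ℝ => E*h*up h) (E*1*up h + E*h*u') h :=
      ((hasDerivAt_id h).const_mul E).mul hu'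
    have P2 : HasDerivAt (fun h:ℝ => Real.log (1+E*h*up h)) ((E*1*up h + E*h*u')/(1+E*h*up h)) h := by
      simpa using (m.const_add 1).log h1xne
    have L := P1.mul P2
    have total := ((A.sub B).sub C).add L
    have hWeq : W =ᶠ[nhds h] (fun h:ℝ =>
        up h^2/2 - up h^3/3 - up h/h + 1/(E*h^2) * Real.log (1+E*h*up h)) :=
      Filter.Eventually.of_forall hW
    have hkey : (1 - up h)*(1+E*h*up h) = E := by linear_combination (-1) * key h hh.le
    have total' : HasDerivAt W
        ((2*up h^1*u')/2 - (3*up h^2*u')/3 - (u'*h - up h*1)/h^2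
          + ((0*(E*h^2) - 1*(E*(2*h^1)))/(E*h^2)^2 * Real.log (1+E*h*up h)
            + 1/(E*h^2) * ((E*1*up h + E*h*u')/(1+E*h*up h)))) h :=
      HasDerivAt.congr_of_eventuallyEq total hWeq
    convert total' using 1
    field_simp
    linear_combination (-(E*h^3*up h*u')) * hkey
  -- (1) strict monotonicity
  have hmono : StrictMonoOn W (Set.Ioi h₁) := by
    apply strictMonoOn_of_deriv_pos (convex_Ioi h₁)
    · exact fun h hh => (hderiv h hh).continuousAt.continuousWithinAt
    · intro h hh
      rw [interior_Ioi] at hh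
      rw [(hderiv h hh).deriv]
      have hh0 := lt_trans h₁pos hh
      have hupos := hup_pos h (le_of_lt hh)
      have hxpos : 0 < E*h*up h := by positivity
      exact div_pos (aux_g_pos _ hxpos) (by positivity)
  -- (2) limit
  have ht0 : Tendsto (fun h:ℝ => 1/(E*h)) atTop (nhds 0) := by
    simp only [one_div]
    exact (tendsto_id.const_mul_atTop hE0).inv_tendsto_atTop
  have hupt : Tendsto up atTop (nhds 1) := by
    have hDt : Tendsto (fun h:ℝ => (1 - 1/(E*h))^2 - 4*(E-1)/(E*h)) atTop (nhds 1) := by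
      have h4 : Tendsto (fun h:ℝ => 4*(E-1)/(E*h)) atTop (nhds 0) := by
        have := ht0.const_mul (4*(E-1))
        simp only [mul_zero] at this
        refine this.congr (fun h => by ring)
      have h5 := ((ht0.const_sub 1).pow 2).sub h4
      have he : ((1:ℝ)-0)^2 - 0 = 1 := by norm_num
      rw [he] at h5
      exact h5
    have hst : Tendsto (fun h:ℝ => Real.sqrt ((1 - 1/(E*h))^2 - 4*(E-1)/(E*h))) atTop (nhds 1) := by
      have := (Real.continuous_sqrt.tendsto 1).comp hDt
      simpa [Real.sqrt_one, Function.comp_def] using this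
    have hfin := (((ht0.const_sub 1).add hst).const_mul (1/2:ℝ))
    have he : (1/2:ℝ)*(1-0+1) = 1 := by norm_num
    rw [he] at hfin
    exact hfin.congr (fun h => (hup h).symm)
  have hinv0 : Tendsto (fun h:ℝ => (h:ℝ)⁻¹) atTop (nhds 0) := tendsto_inv_atTop_zero
  have huph : Tendsto (fun h:ℝ => up h / h) atTop (nhds 0) := by
    have := hupt.mul hinv0
    simp only [mul_zero] at this
    exact this.congr (fun h => (div_eq_mul_inv _ _).symm)
  have hlogt : Tendsto (fun h:ℝ => (1/(E*h^2)) * Real.log (1 + E*h*(up h))) atTop (nhds 0) := by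
    apply tendsto_of_tendsto_of_tendsto_of_le_of_le' tendsto_const_nhds huph
    · filter_upwards [eventually_gt_atTop h₁] with h hh
      have hh0 := lt_trans h₁pos hh
      have hupos := hup_pos h hh.le
      have hxpos : 0 < E*h*up h := by positivity
      have : 0 ≤ Real.log (1 + E*h*up h) := Real.log_nonneg (by linarith)
      positivity
    · filter_upwards [eventually_gt_atTop h₁] with h hh
      have hh0 := lt_trans h₁pos hh
      have hupos := hup_pos h hh.le
      have hxpos : 0 < E*h*up h := by positivity
      have hlog : Real.log (1 + E*h*up h) ≤ E*h*up h := by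
        have := Real.log_le_sub_one_of_pos (x := 1 + E*h*up h) (by linarith)
        linarith
      have h2 : (1/(E*h^2)) * Real.log (1 + E*h*up h) ≤ (1/(E*h^2)) * (E*h*up h) := by
        apply mul_le_mul_of_nonneg_left hlog (by positivity)
      calc (1/(E*h^2)) * Real.log (1 + E*h*up h) ≤ (1/(E*h^2)) * (E*h*up h) := h2
        _ = up h / h := by field_simp
  have htend : Tendsto W atTop (nhds (1/6)) := by
    have h1 := (((hupt.pow 2).div_const 2).sub ((hupt.pow 3).div_const 3)).sub huph
    have h2 := h1.add hlogt
    have he : ((1:ℝ)^2/2 - 1^3/3 - 0 + 0) = 1/6 := by norm_num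
    rw [he] at h2
    exact h2.congr (fun h => (hW h).symm)
  -- (3) W h₁ < 0
  have hWh₁ : W h₁ < 0 := by
    have hD₁ : (1 - 1/(E*h₁))^2 - 4*(E-1)/(E*h₁) = 0 := by
      rw [hDval h₁ h₁pos, ht₁]; ring
    have hu₁ : up h₁ = (1/2)*(1 - 1/(E*h₁)) := by
      rw [hup h₁, hD₁, Real.sqrt_zero, add_zero]
    have hu₁pos : 0 < up h₁ := hup_pos h₁ le_rfl
    have hEh₁ne : E*h₁ ≠ 0 := by positivity
    have h2u : 2*(E*h₁)*(up h₁) = E*h₁ - 1 := by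
      rw [hu₁]; field_simp
    have hc : E*h₁*(up h₁)^2 = E-1 := by
      linear_combination -(key h₁ le_rfl) + (up h₁) * h2u
    set F : ℝ → ℝ := fun u => u^2/2 - u^3/3 - u/h₁ + (1/(E*h₁^2))*Real.log (1+E*h₁*u) with hF
    have hFd : ∀ u:ℝ, 0 ≤ u → HasDerivAt F
        ((2*u^1)/2 - (3*u^2)/3 - 1/h₁ + (1/(E*h₁^2))*((E*h₁*1)/(1+E*h₁*u))) u := by
      intro u hu
      have h1x : (1:ℝ) + E*h₁*u ≠ 0 := by positivity
      have A := (hasDerivAt_pow 2 u).div_const 2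
      have B := (hasDerivAt_pow 3 u).div_const 3
      have C := (hasDerivAt_id u).div_const h₁
      have inner : HasDerivAt (fun u:ℝ => 1+E*h₁*u) (E*h₁*1) u :=
        (((hasDerivAt_id u).const_mul (E*h₁))).const_add 1
      have L := (inner.log h1x).const_mul (1/(E*h₁^2))
      have total := ((A.sub B).sub C).add L
      refine total.congr_deriv ?_
      norm_num
    have hanti : StrictAntiOn F (Set.Icc 0 (up h₁)) := by
      apply strictAntiOn_of_deriv_neg (convex_Icc 0 (up h₁))
      · exact fun u hu => (hFd u hu.1).continuousAt.continuousWithinAt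
      · intro u hu
        rw [interior_Icc] at hu
        obtain ⟨hu0, huu⟩ := hu
        rw [(hFd u hu0.le).deriv]
        have h1x : (0:ℝ) < 1 + E*h₁*u := by positivity
        have hne : u - up h₁ ≠ 0 := sub_ne_zero.mpr (ne_of_lt huu)
        have hsq : 0 < (u - up h₁)^2 := pow_two_pos_of_ne_zero hne
        have heq : (2*u^1)/2 - (3*u^2)/3 - 1/h₁ + (1/(E*h₁^2))*((E*h₁*1)/(1+E*h₁*u))
            = -(E*h₁*u*(u - up h₁)^2)/(1+E*h₁*u) := by
          field_simp
          linear_combination (u*h₁) * hc - (u^2*h₁) * h2u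
        rw [heq]
        apply div_neg_of_neg_of_pos _ h1x
        have : 0 < E*h₁*u*(u - up h₁)^2 := mul_pos (by positivity) hsq
        linarith
    have hF0 : F 0 = 0 := by simp [hF]
    have := hanti (Set.left_mem_Icc.2 hu₁pos.le) (Set.right_mem_Icc.2 hu₁pos.le) hu₁pos
    rw [hF0] at this
    have hWF : W h₁ = F (↑(up h₁)) := hW h₁
    rw [hWF]
    exact this
  -- (4) existence and uniqueness
  obtain ⟨H, hHgt, hWH⟩ : ∃ H:ℝ, h₁ < H ∧ 0 < W H := by
    have hev : ∀ᶠ h in atTop, 1/12 < W h :=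
      htend.eventually (eventually_gt_nhds (by norm_num))
    obtain ⟨H, hH⟩ := (hev.and (eventually_gt_atTop h₁)).exists
    exact ⟨H, hH.2, by linarith [hH.1]⟩
  have hEhne : ∀ h ∈ Set.Ici h₁, E*h ≠ 0 := fun h hh => by
    have := (hfac h hh).1; positivity
  have hupC : ContinuousOn up (Set.Ici h₁) := by
    have c1 : ContinuousOn (fun h:ℝ => 1/(E*h)) (Set.Ici h₁) :=
      continuousOn_const.div ((continuous_const.mul continuous_id).continuousOn) hEhne
    have c2 : ContinuousOn (fun h:ℝ => 4*(E-1)/(E*h)) (Set.Ici h₁) :=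
      continuousOn_const.div ((continuous_const.mul continuous_id).continuousOn) hEhne
    have cD := (((continuousOn_const (c := (1:ℝ))).sub c1).pow 2).sub c2
    have cAll := (continuousOn_const (c := (1/2:ℝ))).mul
      (((continuousOn_const (c := (1:ℝ))).sub c1).add cD.sqrt)
    exact cAll.congr (fun h _ => hup h)
  have hWC : ContinuousOn W (Set.Ici h₁) := by
    have hxne : ∀ h ∈ Set.Ici h₁, 1 + E*h*up h ≠ 0 := fun h hh => by
      have h1 := (hfac h hh).1
      have h2 := hup_pos h hh
      have : 0 < E*h*up h := by positivity
      linarith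
    have clog : ContinuousOn (fun h:ℝ => Real.log (1 + E*h*up h)) (Set.Ici h₁) :=
      ContinuousOn.log (continuousOn_const.add
        (((continuous_const.mul continuous_id).continuousOn).mul hupC)) hxne
    have c3 : ContinuousOn (fun h:ℝ => 1/(E*h^2)) (Set.Ici h₁) :=
      continuousOn_const.div ((continuous_const.mul (continuous_pow 2)).continuousOn)
        (fun h hh => by have := (hfac h hh).1; positivity)
    have c4 : ContinuousOn (fun h:ℝ => up h / h) (Set.Ici h₁) :=
      hupC.div continuousOn_id (fun h hh => ((hfac h hh).1).ne')
    have cAll := ((((hupC.pow 2).div_const 2).sub ((hupC.pow 3).div_const 3)).sub c4).add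
      (c3.mul clog)
    exact cAll.congr (fun h _ => hW h)
  obtain ⟨c, hcmem, hWc⟩ := intermediate_value_Icc hHgt.le
    (hWC.mono Set.Icc_subset_Ici_self) (Set.mem_Icc.2 ⟨hWh₁.le, hWH.le⟩)
  have hc1 : h₁ < c := by
    rcases lt_or_eq_of_le hcmem.1 with h'|h'
    · exact h'
    · exfalso; rw [← h'] at hWc; linarith
  have key3 : ∀ x, h₁ < x → ((x < c → W x < 0) ∧ (x = c → W x = 0) ∧ (c < x → 0 < W x)) := by
    intro x hx
    refine ⟨fun hlt => ?_, fun heq => by rw [heq, hWc], fun hgt => ?_⟩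
    · have := hmono (Set.mem_Ioi.2 hx) (Set.mem_Ioi.2 hc1) hlt
      rw [hWc] at this; exact this
    · have := hmono (Set.mem_Ioi.2 hc1) (Set.mem_Ioi.2 hx) hgt
      rw [hWc] at this; exact this
  refine ⟨hmono, htend, hWh₁, ⟨c, ⟨hc1, ?_⟩, ?_⟩⟩
  · intro h hh
    obtain ⟨k1, k2, k3⟩ := key3 h hh
    refine ⟨⟨fun hw => ?_, k1⟩, ⟨fun hw => ?_, fun he => k2 he⟩, ⟨fun hw => ?_, k3⟩⟩
    · rcases lt_trichotomy h c with h'|h'|h'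
      · exact h'
      · exfalso; have := k2 h'; linarith
      · exfalso; have := k3 h'; linarith
    · rcases lt_trichotomy h c with h'|h'|h'
      · exfalso; have := k1 h'; linarith
      · exact h'
      · exfalso; have := k3 h'; linarith
    · rcases lt_trichotomy h c with h'|h'|h'
      · exfalso; have := k1 h'; linarith
      · exfalso; have := k2 h'; linarith
      · exact h'
  · rintro y ⟨hy1, hy2⟩
    exact ((hy2 c hc1).2.1.mp hWc).symm
end
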